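/- In the setting of the Petrov–Galerkin scheme: if u ∈ H and u_nc ∈ W satisfy ⟨u − u_nc, J w⟩ = 0 for all w ∈ W, then the interpolation error part satisfies ‖I u − u_nc‖ ≤ Λ₀ · ‖u − I u‖, where Λ₀ := sup over nonzero w ∈ W of ‖w − J w‖/‖w‖. -/

import Mathlib

open RealInnerProductSpace

/-- The discrete part of the Petrov–Galerkin error: `‖I u - u_nc‖ ≤ Λ₀ ‖u - I u‖`. -/
theorem petrovGalerkin_discrete_error {H : Type*} [NormedAddCommGroup H] [InnerProductSpace ℝ H]
    [CompleteSpace H] (W : Submodule ℝ H) [FiniteDimensional ℝ W]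
    (I : H →ₗ[ℝ] W) (hI : ∀ (v : H) (w : W), ⟪v - (I v : H), (w : H)⟫ = 0)
    (J : W →L[ℝ] H) (hJ : ∀ w : W, I (J w) = w)
    (u : H) (unc : W) (h : ∀ w : W, ⟪u - (unc : H), J w⟫ = 0) :
    ‖(I u : H) - (unc : H)‖ ≤ ‖W.subtypeL - J‖ * ‖u - (I u : H)‖ := by
  set w : W := I u - unc with hw
  -- For any x : W, x - J x is orthogonal to W
  have hperp : ∀ (x w' : W), ⟪(x : H) - J x, (w' : H)⟫ = 0 := by
    intro x w'
    have h0 := hI (J x) w'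
    rw [hJ] at h0
    rw [← neg_sub (J x) (x : H), inner_neg_left, h0, neg_zero]
  -- key identity
  have key : ⟪(I u : H) - (unc : H), (I u : H) - (unc : H)⟫
      = ⟪u - (I u : H), (w : H) - J w⟫ := by
    have e1 := hI u w
    have e2 := h w
    have e3 := hperp w w
    have hwc : (w : H) = (I u : H) - (unc : H) := by rw [hw]; push_cast; ring_nf
    rw [hwc] at e1 e3 ⊢
    simp only [inner_sub_left, inner_sub_right] at e1 e2 e3 ⊢
    have c1 := real_inner_comm u (J w)
    have c2 := real_inner_comm ((I u : H)) (J w)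
    have c3 := real_inner_comm ((unc : H)) (J w)
    have c4 := real_inner_comm u ((I u : H))
    have c5 := real_inner_comm u ((unc : H))
    have c6 := real_inner_comm ((I u : H)) ((unc : H))
    linarith
  have hwJ : (w : H) - J w = (W.subtypeL - J) w := by
    simp [ContinuousLinearMap.sub_apply]
  have hsq : ‖(I u : H) - (unc : H)‖ ^ 2
      ≤ ‖u - (I u : H)‖ * (‖W.subtypeL - J‖ * ‖(I u : H) - (unc : H)‖) := by
    have := real_inner_le_norm (u - (I u : H)) ((w : H) - J w)
    have hb : ‖(w : H) - J w‖ ≤ ‖W.subtypeL - J‖ * ‖w‖ := by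
      rw [hwJ]; exact (W.subtypeL - J).le_opNorm w
    have hnw : ‖w‖ = ‖(I u : H) - (unc : H)‖ := by
      rw [hw, Submodule.coe_norm]; norm_cast
    rw [← real_inner_self_eq_norm_sq, key]
    calc ⟪u - (I u : H), (w : H) - J w⟫
        ≤ ‖u - (I u : H)‖ * ‖(w : H) - J w‖ := this
      _ ≤ ‖u - (I u : H)‖ * (‖W.subtypeL - J‖ * ‖(I u : H) - (unc : H)‖) := by
          rw [← hnw]
          exact mul_le_mul_of_nonneg_left hb (norm_nonneg _)
  rcases eq_or_lt_of_le (norm_nonneg ((I u : H) - (unc : H))) with h0 | h0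
  · rw [← h0]
    positivity
  · have := (mul_le_mul_iff_of_pos_right h0).mp (by nlinarith : ‖(I u : H) - (unc : H)‖ * ‖(I u : H) - (unc : H)‖ ≤ (‖W.subtypeL - J‖ * ‖u - (I u : H)‖) * ‖(I u : H) - (unc : H)‖)
    exact this
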